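/- arXiv:2005.11807 — 3 statements merged into one kernel-verified Lean document; each statement's English description precedes it below -/
import Mathlib

section
/- Let t > 0, 0 ≤ c̃ < c ≤ 1, s = √(1-c²), s̃ = √(1-c̃²), and F(q) = (A(q) + √(A(q)² - 4B(q)²))/2 with A(q) = q² + t² - 2qtcc̃, B(q) = -tqss̃. Then F is differentiable at q* = tc̃/c and F'(q*) = 0. -/
theorem stmt_4 (t c ctil : ℝ) (ht : 0 < t) (hctil : 0 ≤ ctil) (hlt : ctil < c) (hc : c ≤ 1)
    (s stil : ℝ) (hs : s = Real.sqrt (1 - c ^ 2)) (hstil : stil = Real.sqrt (1 - ctil ^ 2))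
    (A B F : ℝ → ℝ)
    (hA : ∀ q, A q = q ^ 2 + t ^ 2 - 2 * q * t * c * ctil)
    (hB : ∀ q, B q = -(t * q * s * stil))
    (hF : ∀ q, F q = (A q + Real.sqrt ((A q) ^ 2 - 4 * (B q) ^ 2)) / 2)
    (qstar : ℝ) (hq : qstar = t * ctil / c) :
    DifferentiableAt ℝ F qstar ∧ deriv F qstar = 0 := by
  have hc0 : 0 < c := lt_of_le_of_lt hctil hlt
  have hu : (0:ℝ) ≤ 1 - c ^ 2 := by nlinarith
  have hv : (0:ℝ) ≤ 1 - ctil ^ 2 := by nlinarith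
  have hs2 : s ^ 2 = 1 - c ^ 2 := by rw [hs, Real.sq_sqrt hu]
  have hstil2 : stil ^ 2 = 1 - ctil ^ 2 := by rw [hstil, Real.sq_sqrt hv]
  set g : ℝ → ℝ := fun q => (q ^ 2 + t ^ 2 - 2 * q * t * c * ctil) ^ 2
      - (4 * t ^ 2 * (1 - c ^ 2) * (1 - ctil ^ 2)) * q ^ 2 with hg
  have hFg : F = fun q => ((q ^ 2 + t ^ 2 - 2 * q * t * c * ctil) + Real.sqrt (g q)) / 2 := by
    funext q
    rw [hF, hA, hB]
    have hBval : (-(t * q * s * stil)) ^ 2 = t ^ 2 * q ^ 2 * (1 - c ^ 2) * (1 - ctil ^ 2) := by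
      rw [← hs2, ← hstil2]; ring
    have : (q ^ 2 + t ^ 2 - 2 * q * t * c * ctil) ^ 2 - 4 * (-(t * q * s * stil)) ^ 2 = g q := by
      rw [hBval, hg]; ring
    rw [this]
  -- value of g at qstar
  have hgq : g qstar = (t ^ 2 * (1 - ctil ^ 2 / c ^ 2)) ^ 2 := by
    rw [hg, hq]
    field_simp
    ring
  have hPpos : 0 < t ^ 2 * (1 - ctil ^ 2 / c ^ 2) := by
    have h1 : ctil ^ 2 / c ^ 2 < 1 := by
      rw [div_lt_one (by positivity)]
      nlinarith
    have : 0 < t ^ 2 := by positivity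
    nlinarith
  have hgpos : 0 < g qstar := by rw [hgq]; positivity
  have hsqrtg : Real.sqrt (g qstar) = t ^ 2 * (1 - ctil ^ 2 / c ^ 2) := by
    rw [hgq, Real.sqrt_sq hPpos.le]
  -- derivative of the polynomial part
  have h1 : HasDerivAt (fun q : ℝ => q ^ 2 + t ^ 2 - 2 * q * t * c * ctil)
      (2 * qstar - 2 * t * c * ctil) qstar := by
    have h := ((hasDerivAt_pow 2 qstar).add_const (t ^ 2)).sub
      ((hasDerivAt_id qstar).const_mul (2 * t * c * ctil))
    convert h using 1
    all_goals first
      | (funext q; simp only [id_eq, hg, Pi.sub_apply, Pi.pow_apply] <;> push_cast <;> ring)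
      | (push_cast; ring)
      | rfl
  -- derivative of g
  have hgd : HasDerivAt g
      (2 * (qstar ^ 2 + t ^ 2 - 2 * qstar * t * c * ctil) * (2 * qstar - 2 * t * c * ctil)
        - (4 * t ^ 2 * (1 - c ^ 2) * (1 - ctil ^ 2)) * (2 * qstar)) qstar := by
    have h := (h1.pow 2).sub ((hasDerivAt_pow 2 qstar).const_mul
      (4 * t ^ 2 * (1 - c ^ 2) * (1 - ctil ^ 2)))
    convert h using 1
    all_goals first
      | (funext q; simp only [id_eq, hg, Pi.sub_apply, Pi.pow_apply] <;> push_cast <;> ring)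
      | (push_cast; ring)
      | rfl
  set G' : ℝ := 2 * (qstar ^ 2 + t ^ 2 - 2 * qstar * t * c * ctil) * (2 * qstar - 2 * t * c * ctil)
        - (4 * t ^ 2 * (1 - c ^ 2) * (1 - ctil ^ 2)) * (2 * qstar) with hG'
  -- derivative of sqrt ∘ g
  have hsq : HasDerivAt (fun q => Real.sqrt (g q)) (1 / (2 * Real.sqrt (g qstar)) * G') qstar :=
    (Real.hasDerivAt_sqrt (ne_of_gt hgpos)).comp qstar hgd
  -- total derivative
  have hFd : HasDerivAt F
      (((2 * qstar - 2 * t * c * ctil) + 1 / (2 * Real.sqrt (g qstar)) * G') / 2) qstar := by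
    rw [hFg]
    exact (h1.add hsq).div_const 2
  have hzero : ((2 * qstar - 2 * t * c * ctil) + 1 / (2 * Real.sqrt (g qstar)) * G') / 2 = 0 := by
    rw [hsqrtg]
    have hDne : 2 * (t ^ 2 * (1 - ctil ^ 2 / c ^ 2)) ≠ 0 := by
      have := hPpos; positivity
    have key : G' = -((2 * qstar - 2 * t * c * ctil) * (2 * (t ^ 2 * (1 - ctil ^ 2 / c ^ 2)))) := by
      rw [hG', hq]
      field_simp
      ring
    rw [key]
    have hcanc : 1 / (2 * (t ^ 2 * (1 - ctil ^ 2 / c ^ 2))) *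
        (-((2 * qstar - 2 * t * c * ctil) * (2 * (t ^ 2 * (1 - ctil ^ 2 / c ^ 2)))))
        = -(2 * qstar - 2 * t * c * ctil) := by
      set X := 2 * qstar - 2 * t * c * ctil
      set D := 2 * (t ^ 2 * (1 - ctil ^ 2 / c ^ 2))
      calc 1 / D * (-(X * D)) = -(X * (D * (1 / D))) := by ring
        _ = -(X * 1) := by rw [mul_one_div_cancel hDne]
        _ = -X := by ring
    rw [hcanc]
    ring
  constructor
  · exact hFd.differentiableAt
  · rw [hFd.deriv, hzero]
end

section
/- Let t > 0, 0 ≤ c ≤ 1, 0 ≤ c̃ ≤ 1, not both zero, s = √(1-c²), s̃ = √(1-c̃²), and let D(q) = [[t,0],[0,0]] - q[[cc̃, cs̃],[sc̃, ss̃]]. Then q* = t·min{c,c̃}/max{c,c̃} is a global minimizer of q ↦ ‖D(q)‖_op² over ℝ, and the minimum value is t²·max{s², s̃²}. -/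
set_option synthInstance.maxHeartbeats 1000000
set_option maxHeartbeats 1000000

noncomputable def opNorm (M : Matrix (Fin 2) (Fin 2) ℝ) : ℝ :=
  ‖Matrix.toEuclideanCLM (𝕜 := ℝ) M‖

lemma apply_normsq (M : Matrix (Fin 2) (Fin 2) ℝ) (x : EuclideanSpace ℝ (Fin 2)) :
    ‖(Matrix.toEuclideanCLM (𝕜 := ℝ) M) x‖ ^ 2 =
      (M 0 0 * x 0 + M 0 1 * x 1) ^ 2 + (M 1 0 * x 0 + M 1 1 * x 1) ^ 2 := by
  have hx : x = (WithLp.equiv 2 (Fin 2 → ℝ)).symm (fun i => x i) := rfl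
  rw [hx, WithLp.equiv_symm_apply, Matrix.toEuclideanCLM_toLp]
  rw [EuclideanSpace.norm_eq]
  rw [Real.sq_sqrt (by positivity)]
  simp [Matrix.toLin'_apply, Matrix.mulVec, dotProduct, Fin.sum_univ_two, sq_abs]

lemma vec_normsq (x : EuclideanSpace ℝ (Fin 2)) :
    ‖x‖ ^ 2 = x 0 ^ 2 + x 1 ^ 2 := by
  rw [EuclideanSpace.norm_eq, Real.sq_sqrt (by positivity)]
  simp [Fin.sum_univ_two, sq_abs]

open Matrix in
lemma opNorm_transpose (M : Matrix (Fin 2) (Fin 2) ℝ) : opNorm Mᵀ = opNorm M := by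
  unfold opNorm
  have h : Mᵀ = star M := by
    ext i j
    simp [Matrix.star_apply, Matrix.transpose_apply]
  rw [h, map_star, ContinuousLinearMap.star_eq_adjoint]
  exact LinearIsometryEquiv.norm_map ContinuousLinearMap.adjoint _

lemma opNorm_nonneg (M : Matrix (Fin 2) (Fin 2) ℝ) : 0 ≤ opNorm M := norm_nonneg _

lemma sq_le_of_norm (M : Matrix (Fin 2) (Fin 2) ℝ) (x : EuclideanSpace ℝ (Fin 2)) :
    ‖(Matrix.toEuclideanCLM (𝕜 := ℝ) M) x‖ ^ 2 ≤ opNorm M ^ 2 * ‖x‖ ^ 2 := by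
  have h := (Matrix.toEuclideanCLM (𝕜 := ℝ) M).le_opNorm x
  have h1 : (0:ℝ) ≤ ‖(Matrix.toEuclideanCLM (𝕜 := ℝ) M) x‖ := norm_nonneg _
  unfold opNorm
  nlinarith [norm_nonneg x, opNorm_nonneg M]


theorem stmt_6 (t c ctil : ℝ) (ht : 0 < t)
    (hc0 : 0 ≤ c) (hc1 : c ≤ 1) (hctil0 : 0 ≤ ctil) (hctil1 : ctil ≤ 1)
    (hnz : ¬(c = 0 ∧ ctil = 0))
    (s stil : ℝ) (hs : s = Real.sqrt (1 - c ^ 2)) (hstil : stil = Real.sqrt (1 - ctil ^ 2))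
    (D : ℝ → Matrix (Fin 2) (Fin 2) ℝ)
    (hD : ∀ q, D q = !![t, 0; 0, 0] - q • !![c * ctil, c * stil; s * ctil, s * stil])
    (qstar : ℝ) (hq : qstar = t * min c ctil / max c ctil) :
    (∀ q, (opNorm (D qstar)) ^ 2 ≤ (opNorm (D q)) ^ 2) ∧
    (opNorm (D qstar)) ^ 2 = t ^ 2 * max (s ^ 2) (stil ^ 2) := by
  have hs0 : 0 ≤ s := hs ▸ Real.sqrt_nonneg _
  have hstil00 : 0 ≤ stil := hstil ▸ Real.sqrt_nonneg _
  have hs2 : s ^ 2 = 1 - c ^ 2 := by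
    rw [hs]; exact Real.sq_sqrt (by nlinarith)
  have hstil2 : stil ^ 2 = 1 - ctil ^ 2 := by
    rw [hstil]; exact Real.sq_sqrt (by nlinarith)
  have hE : ∀ q : ℝ, D q 0 0 = t - q * (c * ctil) ∧ D q 0 1 = -(q * (c * stil)) ∧
      D q 1 0 = -(q * (s * ctil)) ∧ D q 1 1 = -(q * (s * stil)) := by
    intro q
    refine ⟨?_, ?_, ?_, ?_⟩ <;> rw [hD] <;> simp [Matrix.sub_apply]
  -- lower bound 1 : t^2 * stil^2 ≤ opNorm (D q)^2 for all q
  have lb1 : ∀ q : ℝ, t ^ 2 * stil ^ 2 ≤ opNorm (D q) ^ 2 := by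
    intro q
    set x : EuclideanSpace ℝ (Fin 2) := (WithLp.equiv 2 (Fin 2 → ℝ)).symm ![stil, -ctil] with hxdef
    have hx0 : x 0 = stil := rfl
    have hx1 : x 1 = -ctil := rfl
    have hxn : ‖x‖ ^ 2 = 1 := by rw [vec_normsq, hx0, hx1]; nlinarith
    have happ := apply_normsq (D q) x
    obtain ⟨e00, e01, e10, e11⟩ := hE q
    rw [e00, e01, e10, e11, hx0, hx1] at happ
    have hval : ‖(Matrix.toEuclideanCLM (𝕜 := ℝ) (D q)) x‖ ^ 2 = t ^ 2 * stil ^ 2 := by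
      rw [happ]; ring
    have h2 := sq_le_of_norm (D q) x
    rw [hxn, hval] at h2
    linarith
  -- lower bound 2 : t^2 * s^2 ≤ opNorm (D q)^2 for all q (via transpose)
  have lb2 : ∀ q : ℝ, t ^ 2 * s ^ 2 ≤ opNorm (D q) ^ 2 := by
    intro q
    rw [← opNorm_transpose (D q)]
    set M := (D q).transpose with hM
    set x : EuclideanSpace ℝ (Fin 2) := (WithLp.equiv 2 (Fin 2 → ℝ)).symm ![s, -c] with hxdef
    have hx0 : x 0 = s := rfl
    have hx1 : x 1 = -c := rfl
    have hxn : ‖x‖ ^ 2 = 1 := by rw [vec_normsq, hx0, hx1]; nlinarith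
    have happ := apply_normsq M x
    obtain ⟨e00, e01, e10, e11⟩ := hE q
    have f00 : M 0 0 = t - q * (c * ctil) := e00
    have f01 : M 0 1 = -(q * (s * ctil)) := e10
    have f10 : M 1 0 = -(q * (c * stil)) := e01
    have f11 : M 1 1 = -(q * (s * stil)) := e11
    rw [f00, f01, f10, f11, hx0, hx1] at happ
    have hval : ‖(Matrix.toEuclideanCLM (𝕜 := ℝ) M) x‖ ^ 2 = t ^ 2 * s ^ 2 := by
      rw [happ]; ring
    have h2 := sq_le_of_norm M x
    rw [hxn, hval] at h2
    linarith
  rcases le_total c ctil with hcase | hcase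
  · -- c ≤ ctil : qstar = t*c/ctil, optimal value t^2 * s^2
    have hctpos : 0 < ctil := by
      rcases lt_or_eq_of_le hctil0 with h | h
      · exact h
      · exact absurd ⟨le_antisymm (h ▸ hcase) hc0, h.symm⟩ hnz
    have hqs : qstar = t * c / ctil := by rw [hq, min_eq_left hcase, max_eq_right hcase]
    have hq' : qstar * ctil = t * c := by
      rw [hqs]; field_simp
    have hc2le : c ^ 2 ≤ ctil ^ 2 := by nlinarith
    have hss : stil ^ 2 ≤ s ^ 2 := by rw [hs2, hstil2]; linarith
    have h1 : qstar ^ 2 * ctil ^ 2 = t ^ 2 * c ^ 2 := by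
      linear_combination (qstar * ctil + t * c) * hq'
    have step2 : t ^ 2 * c ^ 2 * stil ^ 2 ≤ t ^ 2 * s ^ 2 * ctil ^ 2 := by
      rw [hs2, hstil2]
      nlinarith [mul_le_mul_of_nonneg_left hc2le (sq_nonneg t)]
    have key2 : qstar ^ 2 * stil ^ 2 ≤ t ^ 2 * s ^ 2 := by
      have h1' : qstar ^ 2 * stil ^ 2 * ctil ^ 2 = t ^ 2 * c ^ 2 * stil ^ 2 := by
        linear_combination stil ^ 2 * h1
      have : qstar ^ 2 * stil ^ 2 * ctil ^ 2 ≤ t ^ 2 * s ^ 2 * ctil ^ 2 := by linarith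
      exact le_of_mul_le_mul_right this (by positivity)
    -- upper bound
    have hub : opNorm (D qstar) ≤ t * s := by
      unfold opNorm
      refine ContinuousLinearMap.opNorm_le_bound _ (by positivity) ?_
      intro x
      have hsq : ‖(Matrix.toEuclideanCLM (𝕜 := ℝ) (D qstar)) x‖ ^ 2 ≤ (t * s) ^ 2 * ‖x‖ ^ 2 := by
        rw [apply_normsq, vec_normsq]
        obtain ⟨e00, e01, e10, e11⟩ := hE qstar
        rw [e00, e01, e10, e11]
        have e1 : t - qstar * (c * ctil) = t * s ^ 2 := by
          linear_combination (-c) * hq' + (-t) * hs2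
        have e2 : qstar * (s * ctil) = t * (c * s) := by
          linear_combination s * hq'
        rw [e1, e2]
        have hsc : s ^ 2 + c ^ 2 = 1 := by rw [hs2]; ring
        have hLHS : (t * s ^ 2 * x 0 + -(qstar * (c * stil)) * x 1) ^ 2 +
            (-(t * (c * s)) * x 0 + -(qstar * (s * stil)) * x 1) ^ 2 =
            t ^ 2 * s ^ 2 * x 0 ^ 2 + qstar ^ 2 * stil ^ 2 * x 1 ^ 2 := by
          linear_combination (t ^ 2 * s ^ 2 * x 0 ^ 2 + qstar ^ 2 * stil ^ 2 * x 1 ^ 2) * hsc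
        rw [hLHS]
        nlinarith [mul_nonneg (sub_nonneg.mpr key2) (sq_nonneg (x 1))]
      have h0 : (0:ℝ) ≤ t * s := by positivity
      nlinarith [norm_nonneg ((Matrix.toEuclideanCLM (𝕜 := ℝ) (D qstar)) x), norm_nonneg x,
        mul_nonneg h0 (norm_nonneg x)]
    have hub2 : opNorm (D qstar) ^ 2 ≤ t ^ 2 * s ^ 2 := by
      have := pow_le_pow_left₀ (opNorm_nonneg (D qstar)) hub 2
      nlinarith
    have heq : opNorm (D qstar) ^ 2 = t ^ 2 * s ^ 2 := le_antisymm hub2 (lb2 qstar)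
    refine ⟨fun q => ?_, ?_⟩
    · rw [heq]; exact lb2 q
    · rw [heq, max_eq_left hss]
  · -- ctil ≤ c : qstar = t*ctil/c, optimal value t^2 * stil^2
    have hcpos : 0 < c := by
      rcases lt_or_eq_of_le hc0 with h | h
      · exact h
      · exact absurd ⟨h.symm, le_antisymm (h ▸ hcase) hctil0⟩ hnz
    have hqs : qstar = t * ctil / c := by rw [hq, min_eq_right hcase, max_eq_left hcase]
    have hq' : qstar * c = t * ctil := by
      rw [hqs]; field_simp
    have hc2le : ctil ^ 2 ≤ c ^ 2 := by nlinarith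
    have hss : s ^ 2 ≤ stil ^ 2 := by rw [hs2, hstil2]; linarith
    have h1 : qstar ^ 2 * c ^ 2 = t ^ 2 * ctil ^ 2 := by
      linear_combination (qstar * c + t * ctil) * hq'
    have step2 : t ^ 2 * ctil ^ 2 * s ^ 2 ≤ t ^ 2 * stil ^ 2 * c ^ 2 := by
      rw [hs2, hstil2]
      nlinarith [mul_le_mul_of_nonneg_left hc2le (sq_nonneg t)]
    have key2 : qstar ^ 2 * s ^ 2 ≤ t ^ 2 * stil ^ 2 := by
      have h1' : qstar ^ 2 * s ^ 2 * c ^ 2 = t ^ 2 * ctil ^ 2 * s ^ 2 := by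
        linear_combination s ^ 2 * h1
      have : qstar ^ 2 * s ^ 2 * c ^ 2 ≤ t ^ 2 * stil ^ 2 * c ^ 2 := by linarith
      exact le_of_mul_le_mul_right this (by positivity)
    have hub : opNorm (D qstar) ≤ t * stil := by
      unfold opNorm
      refine ContinuousLinearMap.opNorm_le_bound _ (by positivity) ?_
      intro x
      have hsq : ‖(Matrix.toEuclideanCLM (𝕜 := ℝ) (D qstar)) x‖ ^ 2 ≤ (t * stil) ^ 2 * ‖x‖ ^ 2 := by
        rw [apply_normsq, vec_normsq]
        obtain ⟨e00, e01, e10, e11⟩ := hE qstar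
        rw [e00, e01, e10, e11]
        have e1 : t - qstar * (c * ctil) = t * stil ^ 2 := by
          linear_combination (-ctil) * hq' + (-t) * hstil2
        have e2 : qstar * (c * stil) = t * (ctil * stil) := by
          linear_combination stil * hq'
        rw [e1, e2]
        have hsc : stil ^ 2 + ctil ^ 2 = 1 := by rw [hstil2]; ring
        have hLHS : (t * stil ^ 2 * x 0 + -(t * (ctil * stil)) * x 1) ^ 2 +
            (-(qstar * (s * ctil)) * x 0 + -(qstar * (s * stil)) * x 1) ^ 2 =
            t ^ 2 * stil ^ 2 * (stil * x 0 - ctil * x 1) ^ 2 +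
            qstar ^ 2 * s ^ 2 * (ctil * x 0 + stil * x 1) ^ 2 := by ring
        rw [hLHS]
        have hrot : t ^ 2 * stil ^ 2 * ((stil * x 0 - ctil * x 1) ^ 2 +
            (ctil * x 0 + stil * x 1) ^ 2) = t ^ 2 * stil ^ 2 * (x 0 ^ 2 + x 1 ^ 2) := by
          linear_combination (t ^ 2 * stil ^ 2 * (x 0 ^ 2 + x 1 ^ 2)) * hsc
        nlinarith [mul_nonneg (sub_nonneg.mpr key2) (sq_nonneg (ctil * x 0 + stil * x 1)), hrot]
      have h0 : (0:ℝ) ≤ t * stil := by positivity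
      nlinarith [norm_nonneg ((Matrix.toEuclideanCLM (𝕜 := ℝ) (D qstar)) x), norm_nonneg x,
        mul_nonneg h0 (norm_nonneg x)]
    have hub2 : opNorm (D qstar) ^ 2 ≤ t ^ 2 * stil ^ 2 := by
      have := pow_le_pow_left₀ (opNorm_nonneg (D qstar)) hub 2
      nlinarith
    have heq : opNorm (D qstar) ^ 2 = t ^ 2 * stil ^ 2 := le_antisymm hub2 (lb1 qstar)
    refine ⟨fun q => ?_, ?_⟩
    · rw [heq]; exact lb1 q
    · rw [heq, max_eq_right hss]
end

section
/- Let t > 0, 0 ≤ c̃ ≤ c ≤ 1, s = √(1-c²), s̃ = √(1-c̃²). The squared operator norm of D(t) = [[t,0],[0,0]] - t[[cc̃, cs̃],[sc̃, ss̃]] equals t²(1 - cc̃ + (c - c̃)) = t²(1 - c̃)(1 + c). -/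
open Matrix

lemma quadform_nonneg (p q r x y : ℝ) (hp : 0 ≤ p) (hr : 0 ≤ r) (hd : q^2 = p*r) :
    0 ≤ p*x^2 + 2*q*x*y + r*y^2 := by
  rcases hp.eq_or_lt with h | h
  · have hq : q = 0 := by nlinarith [sq_nonneg q]
    subst hq
    simp [← h]
    positivity
  · have : p*x^2 + 2*q*x*y + r*y^2 = (p*x+q*y)^2 / p := by
      field_simp; nlinarith [hd]
    rw [this]; positivity


lemma key (M : Matrix (Fin 2) (Fin 2) ℝ) (a : ℝ) (ha : 0 ≤ a)
    (hub : ∀ x y : ℝ, (M 0 0 * x + M 0 1 * y)^2 + (M 1 0 * x + M 1 1 * y)^2 ≤ a * (x^2 + y^2))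
    (hlb : ∃ x y : ℝ, (x ≠ 0 ∨ y ≠ 0) ∧
      (M 0 0 * x + M 0 1 * y)^2 + (M 1 0 * x + M 1 1 * y)^2 = a * (x^2 + y^2)) :
    opNorm M ^ 2 = a := by
  have hTx : ∀ v : EuclideanSpace ℝ (Fin 2),
      ‖Matrix.toEuclideanCLM (𝕜 := ℝ) M v‖^2
        = (M 0 0 * v 0 + M 0 1 * v 1)^2 + (M 1 0 * v 0 + M 1 1 * v 1)^2 := by
    intro v
    rw [EuclideanSpace.norm_eq]
    rw [Real.sq_sqrt (by positivity)]
    rw [Fin.sum_univ_two]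
    have h0 : (Matrix.toEuclideanCLM (𝕜 := ℝ) M v) 0 = M 0 0 * v 0 + M 0 1 * v 1 := by
      have := Matrix.ofLp_toEuclideanCLM M v
      have h := congrFun this 0
      simpa [Matrix.toLin'_apply, Matrix.mulVec, dotProduct, Fin.sum_univ_two] using h
    have h1 : (Matrix.toEuclideanCLM (𝕜 := ℝ) M v) 1 = M 1 0 * v 0 + M 1 1 * v 1 := by
      have := Matrix.ofLp_toEuclideanCLM M v
      have h := congrFun this 1
      simpa [Matrix.toLin'_apply, Matrix.mulVec, dotProduct, Fin.sum_univ_two] using h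
    rw [h0, h1]
    simp [Real.norm_eq_abs, sq_abs]
  have hnv : ∀ v : EuclideanSpace ℝ (Fin 2), ‖v‖^2 = (v 0)^2 + (v 1)^2 := by
    intro v
    rw [EuclideanSpace.norm_eq, Real.sq_sqrt (by positivity), Fin.sum_univ_two]
    simp [Real.norm_eq_abs, sq_abs]
  have hnorm : ‖Matrix.toEuclideanCLM (𝕜 := ℝ) M‖ = Real.sqrt a := by
    apply le_antisymm
    · apply ContinuousLinearMap.opNorm_le_bound _ (Real.sqrt_nonneg a)
      intro v
      have h1 : ‖Matrix.toEuclideanCLM (𝕜 := ℝ) M v‖^2 ≤ (Real.sqrt a * ‖v‖)^2 := by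
        rw [hTx v, mul_pow, Real.sq_sqrt ha]
        calc _ ≤ a * ((v 0)^2 + (v 1)^2) := hub (v 0) (v 1)
        _ = a * ‖v‖^2 := by rw [hnv v]
      nlinarith [norm_nonneg (Matrix.toEuclideanCLM (𝕜 := ℝ) M v),
        mul_nonneg (Real.sqrt_nonneg a) (norm_nonneg v)]
    · obtain ⟨x, y, hxy, heq⟩ := hlb
      set v : EuclideanSpace ℝ (Fin 2) := (WithLp.equiv 2 _).symm ![x, y] with hv
      have hv0 : v 0 = x := rfl
      have hv1 : v 1 = y := rfl
      have hvne : ‖v‖ ≠ 0 := by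
        simp only [norm_ne_zero_iff]
        intro h
        rcases hxy with h' | h'
        · exact h' (by rw [← hv0, h]; rfl)
        · exact h' (by rw [← hv1, h]; rfl)
      have hTv : ‖Matrix.toEuclideanCLM (𝕜 := ℝ) M v‖^2 = a * ‖v‖^2 := by
        rw [hTx v, hv0, hv1, heq, hnv v, hv0, hv1]
      have hle := (Matrix.toEuclideanCLM (𝕜 := ℝ) M).le_opNorm v
      have hvpos : 0 < ‖v‖ := lt_of_le_of_ne (norm_nonneg v) (Ne.symm hvne)
      have : Real.sqrt a * ‖v‖ ≤ ‖Matrix.toEuclideanCLM (𝕜 := ℝ) M‖ * ‖v‖ := by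
        have : ‖Matrix.toEuclideanCLM (𝕜 := ℝ) M v‖ = Real.sqrt a * ‖v‖ := by
          rw [← Real.sqrt_sq (norm_nonneg _), hTv, Real.sqrt_mul ha, Real.sqrt_sq hvpos.le]
        linarith [this ▸ hle]
      exact le_of_mul_le_mul_right this hvpos
  rw [opNorm, hnorm, Real.sq_sqrt ha]


theorem stmt_9 (t c ctil : ℝ) (ht : 0 < t)
    (hctil0 : 0 ≤ ctil) (hle : ctil ≤ c) (hc1 : c ≤ 1)
    (s stil : ℝ) (hs : s = Real.sqrt (1 - c ^ 2)) (hstil : stil = Real.sqrt (1 - ctil ^ 2)) :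
    (opNorm (!![t, 0; 0, 0] - t • !![c * ctil, c * stil; s * ctil, s * stil])) ^ 2
      = t ^ 2 * (1 - c * ctil + (c - ctil)) ∧
    t ^ 2 * (1 - c * ctil + (c - ctil)) = t ^ 2 * (1 - ctil) * (1 + c) := by
  have hc0 : 0 ≤ c := le_trans hctil0 hle
  have hct1 : ctil ≤ 1 := le_trans hle hc1
  have hs2 : s ^ 2 = 1 - c ^ 2 := by
    rw [hs, Real.sq_sqrt (by nlinarith)]
  have hst2 : stil ^ 2 = 1 - ctil ^ 2 := by
    rw [hstil, Real.sq_sqrt (by nlinarith)]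
  set M := !![t, 0; 0, 0] - t • !![c * ctil, c * stil; s * ctil, s * stil] with hM
  have hM00 : M 0 0 = t - t * (c * ctil) := by simp [hM]
  have hM01 : M 0 1 = -(t * (c * stil)) := by simp [hM]
  have hM10 : M 1 0 = -(t * (s * ctil)) := by simp [hM]
  have hM11 : M 1 1 = -(t * (s * stil)) := by simp [hM]
  constructor
  · apply key
    · have h1 : 0 ≤ 1 - c * ctil + (c - ctil) := by nlinarith
      exact mul_nonneg (sq_nonneg t) h1
    · intro x y
      rw [hM00, hM01, hM10, hM11]
      have key2 : 0 ≤ t^2*(c-ctil)*(1+ctil) * x^2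
          + 2*(t^2*stil*(c-ctil))*x*y + t^2*(c-ctil)*(1-ctil)*y^2 := by
        apply quadform_nonneg
        · exact mul_nonneg (mul_nonneg (sq_nonneg t) (by linarith)) (by linarith)
        · exact mul_nonneg (mul_nonneg (sq_nonneg t) (by linarith)) (by linarith)
        · linear_combination (ctil^2*t^4 + (-2)*c*ctil*t^4 + c^2*t^4) * hst2
      have hident : t ^ 2 * (1 - c * ctil + (c - ctil)) * (x ^ 2 + y ^ 2)
          - (((t - t * (c * ctil)) * x + -(t * (c * stil)) * y) ^ 2
            + (-(t * (s * ctil)) * x + -(t * (s * stil)) * y) ^ 2)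
          = t^2*(c-ctil)*(1+ctil) * x^2
          + 2*(t^2*stil*(c-ctil))*x*y + t^2*(c-ctil)*(1-ctil)*y^2 := by
        linear_combination ((-1)*ctil^2*t^2*x^2 + (-2)*stil*ctil*t^2*x*y
          + (-1)*stil^2*t^2*y^2) * hs2 + ((-1)*t^2*y^2) * hst2
      linarith [key2, hident]
    · rcases eq_or_lt_of_le hle with h | h
      · refine ⟨1, 0, Or.inl one_ne_zero, ?_⟩
        rw [hM00, hM01, hM10, hM11, h]
        linear_combination (c^2*t^2) * hs2
      · refine ⟨stil * (ctil - c), (c - ctil) * (1 + ctil),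
          Or.inr (ne_of_gt (mul_pos (by linarith) (by linarith))), ?_⟩
        rw [hM00, hM01, hM10, hM11]
        linear_combination (stil^2*ctil^2*t^2 + (-2)*stil^2*c*ctil*t^2 + stil^2*c^2*t^2) * hs2
          + (ctil^2*t^2 + ctil^3*t^2 + (-2)*c*ctil*t^2 + (-1)*c*ctil^2*t^2 + c*ctil^3*t^2
            + c^2*t^2 + (-1)*c^2*ctil*t^2 + (-2)*c^2*ctil^2*t^2 + c^3*t^2 + c^3*ctil*t^2) * hst2
  · ring
end
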